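/- Let m ≥ 4. If two 2-PL parameters (α, θ^(1), θ^(2)) and (α', θ'^(1), θ'^(2)), with α, α' ∈ (0,1), assign the same marginal probability to every choice-l order (A', a) for every subset A' ⊆ A with |A'| ∈ {2, 3, 4} and every a ∈ A', then their mixing measures coincide: α δ_{θ^(1)} + (1−α) δ_{θ^(2)} = α' δ_{θ'^(1)} + (1−α') δ_{θ'^(2)}. In other words, the mixture of two Plackett-Luce models over m ≥ 4 alternatives is identifiable (modulo label switching) from choice data over all subsets of sizes 2, 3, and 4. -/

import Mathlib

open Finset

/-- `θ` is a Plackett–Luce parameter over `m` alternatives: all entries are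
strictly positive and they sum to one. -/
def IsPLParam {m : ℕ} (θ : Fin m → ℝ) : Prop :=
  (∀ i, 0 < θ i) ∧ (∑ i, θ i = 1)

/-- PL marginal probability of the choice order `(A', a)`: alternative `a` is
chosen from the subset `A'`. -/
noncomputable def PLchoice {m : ℕ} (θ : Fin m → ℝ) (A' : Finset (Fin m)) (a : Fin m) : ℝ :=
  θ a / ∑ j ∈ A', θ j

/-- The mixing measure `α δ_{θ₁} + (1-α) δ_{θ₂}` of a 2-mixture, represented as the
finitely supported weight function on the parameter space. -/
noncomputable def mixing2 {m : ℕ} (α : ℝ) (θ1 θ2 : Fin m → ℝ) : (Fin m → ℝ) → ℝ :=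
  fun t => (if θ1 = t then α else 0) + (if θ2 = t then 1 - α else 0)


lemma twoSqZero (p q u v : ℝ) (hp : 0 < p) (hq : 0 < q)
    (h : p*u^2 + q*v^2 = 0) : u = 0 ∧ v = 0 := by
  have h1 : p*u^2 ≤ 0 := by nlinarith [mul_nonneg hq.le (sq_nonneg v)]
  have h2 : 0 ≤ p*u^2 := by positivity
  have h3 : q*v^2 ≤ 0 := by nlinarith [mul_nonneg hp.le (sq_nonneg u)]
  have h4 : 0 ≤ q*v^2 := by positivity
  have hu : u^2 = 0 := by
    rcases mul_eq_zero.mp (le_antisymm h1 h2) with h' | h'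
    · exact absurd h' (ne_of_gt hp)
    · exact h'
  have hv : v^2 = 0 := by
    rcases mul_eq_zero.mp (le_antisymm h3 h4) with h' | h'
    · exact absurd h' (ne_of_gt hq)
    · exact h'
  exact ⟨by nlinarith [hu], by nlinarith [hv]⟩

/-- One-dimensional endgame: two 2-atom mixtures on ℝ with matching moments of
order 1,2,3 have equal mixing measures. -/
lemma oneD (w w' x y x' y' : ℝ) (hw0 : 0 < w) (hw1 : w < 1)
    (hw0' : 0 < w') (hw1' : w' < 1)
    (h1 : w*x + (1-w)*y = w'*x' + (1-w')*y')
    (h2 : w*x^2 + (1-w)*y^2 = w'*x'^2 + (1-w')*y'^2)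
    (h3 : w*x^3 + (1-w)*y^3 = w'*x'^3 + (1-w')*y'^3) :
    (x' = x ∧ y' = y ∧ (w' = w ∨ x = y)) ∨ (x' = y ∧ y' = x ∧ (w' = 1-w ∨ x = y)) := by
  have hw1s : (0:ℝ) < 1 - w := by linarith
  have hw1s' : (0:ℝ) < 1 - w' := by linarith
  by_cases hxy : x = y
  · subst hxy
    have hv : w'*(x'-x)^2 + (1-w')*(y'-x)^2 = 0 := by linear_combination 2*x*h1 - h2
    obtain ⟨hu, hvv⟩ := twoSqZero w' (1-w') (x'-x) (y'-x) hw0' hw1s' hv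
    exact Or.inl ⟨by linarith, by linarith, Or.inr rfl⟩
  · have hne : x' ≠ y' := by
      intro he
      rw [← he] at h1 h2
      have hv : w*(x-x')^2 + (1-w)*(y-x')^2 = 0 := by linear_combination h2 - 2*x'*h1
      obtain ⟨hu, hvv⟩ := twoSqZero w (1-w) (x-x') (y-x') hw0 hw1s hv
      exact hxy (by linarith)
    have hPc : w'*((x'-x)*(x'-y)) + (1-w')*((y'-x)*(y'-y)) = 0 := by
      linear_combination (x+y)*h1 - h2
    have hPzc : w'*(x'*((x'-x)*(x'-y))) + (1-w')*(y'*((y'-x)*(y'-y))) = 0 := by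
      linear_combination (x+y)*h2 - (x*y)*h1 - h3
    have hA : w'*((x'-x)*(x'-y))*(x'-y') = 0 := by linear_combination hPzc - y'*hPc
    have hB : ((1-w')*((y'-x)*(y'-y)))*(x'-y') = 0 := by linear_combination x'*hPc - hPzc
    have hsub : x' - y' ≠ 0 := sub_ne_zero.mpr hne
    have hPx : (x'-x)*(x'-y) = 0 := by
      rcases mul_eq_zero.mp hA with h | h
      · rcases mul_eq_zero.mp h with h' | h'
        · exact absurd h' (ne_of_gt hw0')
        · exact h'
      · exact absurd h hsub
    have hPy : (y'-x)*(y'-y) = 0 := by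
      rcases mul_eq_zero.mp hB with h | h
      · rcases mul_eq_zero.mp h with h' | h'
        · exact absurd h' (ne_of_gt hw1s')
        · exact h'
      · exact absurd h hsub
    have hxne : x - y ≠ 0 := sub_ne_zero.mpr hxy
    rcases mul_eq_zero.mp hPx with hx1 | hx2
    · have hx' : x' = x := by have := sub_eq_zero.mp hx1; linarith
      rcases mul_eq_zero.mp hPy with hy1 | hy2
      · have : y' = x := by have := sub_eq_zero.mp hy1; linarith
        exact absurd (hx'.trans this.symm) hne
      · have hy' : y' = y := by have := sub_eq_zero.mp hy2; linarith
        left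
        refine ⟨hx', hy', Or.inl ?_⟩
        rw [hx', hy'] at h1
        have hww : (w - w')*(x - y) = 0 := by linear_combination h1
        rcases mul_eq_zero.mp hww with h | h
        · have := sub_eq_zero.mp h; linarith
        · exact absurd h hxne
    · have hx' : x' = y := by have := sub_eq_zero.mp hx2; linarith
      rcases mul_eq_zero.mp hPy with hy1 | hy2
      · have hy' : y' = x := by have := sub_eq_zero.mp hy1; linarith
        right
        refine ⟨hx', hy', Or.inl ?_⟩
        rw [hx', hy'] at h1
        have hww : (w - (1 - w'))*(x - y) = 0 := by linear_combination h1
        rcases mul_eq_zero.mp hww with h | h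
        · have := sub_eq_zero.mp h; linarith
        · exact absurd h hxne
      · have hy' : y' = y := by have := sub_eq_zero.mp hy2; linarith
        exact absurd (hx'.trans hy'.symm) hne


lemma fin4_pair_rest : ∀ p q : Fin 4, p ≠ q → ∃ r s : Fin 4,
    r ≠ s ∧ r ≠ p ∧ r ≠ q ∧ s ≠ p ∧ s ≠ q ∧ (∀ t, t = p ∨ t = q ∨ t = r ∨ t = s) := by
  decide

lemma fin4_triple_rest : ∀ i j k : Fin 4, i ≠ j → i ≠ k → j ≠ k → ∃ l : Fin 4,
    l ≠ i ∧ l ≠ j ∧ l ≠ k ∧ (∀ t, t = i ∨ t = j ∨ t = k ∨ t = l) := by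
  decide

lemma fin4_univ_eq (p q r s : Fin 4) (hpq : p ≠ q) (hpr : p ≠ r) (hps : p ≠ s)
    (hqr : q ≠ r) (hqs : q ≠ s) (hrs : r ≠ s) :
    (Finset.univ : Finset (Fin 4)) = {p, q, r, s} := by
  symm
  apply Finset.eq_univ_of_card
  rw [Finset.card_insert_of_notMem (by simp [hpq, hpr, hps]),
    Finset.card_insert_of_notMem (by simp [hqr, hqs]),
    Finset.card_insert_of_notMem (by simp [hrs]), Finset.card_singleton]
  rfl

lemma fin4_sum (f : Fin 4 → ℝ) (p q r s : Fin 4) (hpq : p ≠ q) (hpr : p ≠ r) (hps : p ≠ s)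
    (hqr : q ≠ r) (hqs : q ≠ s) (hrs : r ≠ s) :
    ∑ t, f t = f p + f q + f r + f s := by
  rw [fin4_univ_eq p q r s hpq hpr hps hqr hqs hrs,
    Finset.sum_insert (by simp [hpq, hpr, hps]),
    Finset.sum_insert (by simp [hqr, hqs]),
    Finset.sum_pair hrs]
  ring

lemma momentsFromTwo (X1 Y1 X2 Y2 D2 D3 : ℝ)
    (P1 : X1*D2 + Y1*D3 = 0) (P2 : X2*D2 + Y2*D3 = 0)
    (hcross : X1*Y2 - X2*Y1 ≠ 0) : D2 = 0 ∧ D3 = 0 := by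
  constructor
  · have h : (X1*Y2 - X2*Y1) * D2 = 0 := by linear_combination Y2*P1 - Y1*P2
    rcases mul_eq_zero.mp h with h' | h'
    · exact absurd h' hcross
    · exact h'
  · have h : (X1*Y2 - X2*Y1) * D3 = 0 := by linear_combination X1*P2 - X2*P1
    rcases mul_eq_zero.mp h with h' | h'
    · exact absurd h' hcross
    · exact h'

lemma uniqRel (x y z t : Fin 4 → ℝ) (m1 m2 m3 m4 : ℝ)
    (hm : ∀ r, m1*x r + m2*y r + m3*z r + m4*t r = 0)
    (hsum : m1+m2+m3+m4 = 0) (hm4 : m4 ≠ 0)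
    (hind : ∀ p q : ℝ, (∀ r, p*(y r - x r) + q*(z r - x r) = 0) → p = 0 ∧ q = 0)
    (x1 x2 x3 x4 : ℝ)
    (hx : ∀ r, x1*x r + x2*y r + x3*z r + x4*t r = 0)
    (hxs : x1+x2+x3+x4 = 0) :
    x1*m4 = x4*m1 ∧ x2*m4 = x4*m2 ∧ x3*m4 = x4*m3 := by
  have key : ∀ r, (x2*m4 - x4*m2)*(y r - x r) + (x3*m4 - x4*m3)*(z r - x r) = 0 := by
    intro r
    linear_combination m4*(hx r) - x4*(hm r) + (x r * x4)*hsum - (x r * m4)*hxs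
  obtain ⟨hp, hq⟩ := hind _ _ key
  exact ⟨by linear_combination m4*hxs - x4*hsum - hp - hq, by linarith, by linarith⟩


lemma pencil (w w' A H ai hi mb mc md : ℝ)
    (hDa : A ≠ 0) (hDb : A + mb*H ≠ 0) (hDc : A + mc*H ≠ 0) (hDd : A + md*H ≠ 0)
    (hH : H ≠ 0) (hdet : ai*H - hi*A ≠ 0)
    (heq : w * (ai / A) + (1-w) * ((ai + mb*hi) / (A + mb*H))
         = w' * ((ai + mc*hi) / (A + mc*H)) + (1-w') * ((ai + md*hi) / (A + md*H)))
    (hD1 : (1-w)*mb - w'*mc - (1-w')*md = 0) :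
    A*((1-w)*mb^2 - w'*mc^2 - (1-w')*md^2)
      + H*((mb+mc+md)*((1-w)*mb^2 - w'*mc^2 - (1-w')*md^2)
            - ((1-w)*mb^3 - w'*mc^3 - (1-w')*md^3)) = 0 := by
  have hM : w*ai*((A+mb*H)*((A+mc*H)*(A+md*H)))
      + (1-w)*(ai+mb*hi)*(A*((A+mc*H)*(A+md*H)))
      - w'*(ai+mc*hi)*(A*((A+mb*H)*(A+md*H)))
      - (1-w')*(ai+md*hi)*(A*((A+mb*H)*(A+mc*H))) = 0 := by
    have hDb' : A + H*mb ≠ 0 := by rw [mul_comm]; exact hDb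
    have hDc' : A + H*mc ≠ 0 := by rw [mul_comm]; exact hDc
    have hDd' : A + H*md ≠ 0 := by rw [mul_comm]; exact hDd
    field_simp at heq
    linear_combination heq
  have key : (ai*H - hi*A) * (H^2 * (A*((1-w)*mb^2 - w'*mc^2 - (1-w')*md^2)
      + H*((mb+mc+md)*((1-w)*mb^2 - w'*mc^2 - (1-w')*md^2)
            - ((1-w)*mb^3 - w'*mc^3 - (1-w')*md^3)))) = 0 := by
    linear_combination H * hM + ((ai*H - hi*A)*(A^2*H + A*H^2*(mb+mc+md)
      + H^3*(mb*mc+mb*md+mc*md))) * hD1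
  have h2 : H^2 ≠ 0 := pow_ne_zero 2 hH
  rcases mul_eq_zero.mp key with h | h
  · exact absurd h hdet
  rcases mul_eq_zero.mp h with h' | h'
  · exact absurd h' h2
  · exact h'

section Pencils

variable (w w' : ℝ) (a h b c d : Fin 4 → ℝ) (mb mc md : ℝ)

lemma pairPencil
    (hap : ∀ r, 0 < a r) (hbp : ∀ r, 0 < b r) (hcp : ∀ r, 0 < c r) (hdp : ∀ r, 0 < d r)
    (hb : ∀ r, b r = a r + mb * h r) (hc : ∀ r, c r = a r + mc * h r)
    (hd : ∀ r, d r = a r + md * h r)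
    (heqc : ∀ S : Finset (Fin 4), (S.card = 2 ∨ S.card = 3 ∨ S.card = 4) → ∀ i ∈ S,
      w * (a i / ∑ t ∈ S, a t) + (1-w) * (b i / ∑ t ∈ S, b t)
        = w' * (c i / ∑ t ∈ S, c t) + (1-w') * (d i / ∑ t ∈ S, d t))
    (hD1 : (1-w)*mb - w'*mc - (1-w')*md = 0)
    (p q : Fin 4) (hpq : p ≠ q)
    (hH : h p + h q ≠ 0)
    (hdet : a p*(h p + h q) - h p*(a p + a q) ≠ 0) :
    (a p + a q)*((1-w)*mb^2 - w'*mc^2 - (1-w')*md^2)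
      + (h p + h q)*((mb+mc+md)*((1-w)*mb^2 - w'*mc^2 - (1-w')*md^2)
            - ((1-w)*mb^3 - w'*mc^3 - (1-w')*md^3)) = 0 := by
  have e := heqc {p, q} (Or.inl (Finset.card_pair hpq)) p (by simp)
  rw [Finset.sum_pair hpq, Finset.sum_pair hpq, Finset.sum_pair hpq,
    Finset.sum_pair hpq] at e
  rw [hb p, hb q, hc p, hc q, hd p, hd q] at e
  have eb : (a p + mb*h p) + (a q + mb*h q) = (a p + a q) + mb*(h p + h q) := by ring
  have ec : (a p + mc*h p) + (a q + mc*h q) = (a p + a q) + mc*(h p + h q) := by ring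
  have ed : (a p + md*h p) + (a q + md*h q) = (a p + a q) + md*(h p + h q) := by ring
  rw [eb, ec, ed] at e
  have hDa : a p + a q ≠ 0 := ne_of_gt (add_pos (hap p) (hap q))
  have hDb : (a p + a q) + mb*(h p + h q) ≠ 0 := by
    rw [← eb]; rw [← hb p, ← hb q]; exact ne_of_gt (add_pos (hbp p) (hbp q))
  have hDc : (a p + a q) + mc*(h p + h q) ≠ 0 := by
    rw [← ec]; rw [← hc p, ← hc q]; exact ne_of_gt (add_pos (hcp p) (hcp q))
  have hDd : (a p + a q) + md*(h p + h q) ≠ 0 := by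
    rw [← ed]; rw [← hd p, ← hd q]; exact ne_of_gt (add_pos (hdp p) (hdp q))
  exact pencil w w' (a p + a q) (h p + h q) (a p) (h p) mb mc md hDa hDb hDc hDd hH
    (by intro hz; exact hdet (by linear_combination hz)) e hD1

lemma triplePencil
    (hap : ∀ r, 0 < a r) (hbp : ∀ r, 0 < b r) (hcp : ∀ r, 0 < c r) (hdp : ∀ r, 0 < d r)
    (hb : ∀ r, b r = a r + mb * h r) (hc : ∀ r, c r = a r + mc * h r)
    (hd : ∀ r, d r = a r + md * h r)
    (heqc : ∀ S : Finset (Fin 4), (S.card = 2 ∨ S.card = 3 ∨ S.card = 4) → ∀ i ∈ S,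
      w * (a i / ∑ t ∈ S, a t) + (1-w) * (b i / ∑ t ∈ S, b t)
        = w' * (c i / ∑ t ∈ S, c t) + (1-w') * (d i / ∑ t ∈ S, d t))
    (hD1 : (1-w)*mb - w'*mc - (1-w')*md = 0)
    (p q r : Fin 4) (hpq : p ≠ q) (hpr : p ≠ r) (hqr : q ≠ r)
    (hH : h p + h q + h r ≠ 0)
    (hdet : a p*(h p + h q + h r) - h p*(a p + a q + a r) ≠ 0) :
    (a p + a q + a r)*((1-w)*mb^2 - w'*mc^2 - (1-w')*md^2)
      + (h p + h q + h r)*((mb+mc+md)*((1-w)*mb^2 - w'*mc^2 - (1-w')*md^2)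
            - ((1-w)*mb^3 - w'*mc^3 - (1-w')*md^3)) = 0 := by
  have hcard : ({p, q, r} : Finset (Fin 4)).card = 3 := by
    rw [Finset.card_insert_of_notMem (by simp [hpq, hpr]), Finset.card_pair hqr]
  have e := heqc {p, q, r} (Or.inr (Or.inl hcard)) p (by simp)
  rw [Finset.sum_insert (by simp [hpq, hpr]), Finset.sum_pair hqr,
    Finset.sum_insert (by simp [hpq, hpr]), Finset.sum_pair hqr,
    Finset.sum_insert (by simp [hpq, hpr]), Finset.sum_pair hqr,
    Finset.sum_insert (by simp [hpq, hpr]), Finset.sum_pair hqr] at e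
  rw [hb p, hb q, hb r, hc p, hc q, hc r, hd p, hd q, hd r] at e
  have eb : (a p + mb*h p) + ((a q + mb*h q) + (a r + mb*h r))
      = (a p + a q + a r) + mb*(h p + h q + h r) := by ring
  have ec : (a p + mc*h p) + ((a q + mc*h q) + (a r + mc*h r))
      = (a p + a q + a r) + mc*(h p + h q + h r) := by ring
  have ed : (a p + md*h p) + ((a q + md*h q) + (a r + md*h r))
      = (a p + a q + a r) + md*(h p + h q + h r) := by ring
  have ea : a p + (a q + a r) = a p + a q + a r := by ring
  rw [eb, ec, ed, ea] at e
  have hDa : a p + a q + a r ≠ 0 := ne_of_gt (by have := hap p; have := hap q; have := hap r; linarith)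
  have hDb : (a p + a q + a r) + mb*(h p + h q + h r) ≠ 0 := by
    rw [← eb]; rw [← hb p, ← hb q, ← hb r]
    exact ne_of_gt (by have := hbp p; have := hbp q; have := hbp r; linarith)
  have hDc : (a p + a q + a r) + mc*(h p + h q + h r) ≠ 0 := by
    rw [← ec]; rw [← hc p, ← hc q, ← hc r]
    exact ne_of_gt (by have := hcp p; have := hcp q; have := hcp r; linarith)
  have hDd : (a p + a q + a r) + md*(h p + h q + h r) ≠ 0 := by
    rw [← ed]; rw [← hd p, ← hd q, ← hd r]
    exact ne_of_gt (by have := hdp p; have := hdp q; have := hdp r; linarith)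
  exact pencil w w' (a p + a q + a r) (h p + h q + h r) (a p) (h p) mb mc md hDa hDb hDc hDd hH
    (by intro hz; exact hdet (by linear_combination hz)) e hD1

end Pencils

lemma master (w w' : ℝ) (hw0 : 0 < w) (hw1 : w < 1) (hw0' : 0 < w') (hw1' : w' < 1)
    (a h b c d : Fin 4 → ℝ) (mb mc md : ℝ)
    (hap : ∀ r, 0 < a r) (hbp : ∀ r, 0 < b r) (hcp : ∀ r, 0 < c r) (hdp : ∀ r, 0 < d r)
    (hsa : ∑ r, a r = 1) (hsh : ∑ r, h r = 0) (hh : ∃ r, h r ≠ 0)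
    (hb : ∀ r, b r = a r + mb * h r) (hc : ∀ r, c r = a r + mc * h r)
    (hd : ∀ r, d r = a r + md * h r)
    (heqc : ∀ S : Finset (Fin 4), (S.card = 2 ∨ S.card = 3 ∨ S.card = 4) → ∀ i ∈ S,
      w * (a i / ∑ t ∈ S, a t) + (1-w) * (b i / ∑ t ∈ S, b t)
        = w' * (c i / ∑ t ∈ S, c t) + (1-w') * (d i / ∑ t ∈ S, d t)) :
    (c = a ∧ d = b ∧ (w' = w ∨ b = a)) ∨ (c = b ∧ d = a ∧ (w' = 1 - w ∨ b = a)) := by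
  obtain ⟨r0, hr0⟩ := hh
  have hsb : ∑ r, b r = 1 := by
    simp only [hb]; rw [Finset.sum_add_distrib, ← Finset.mul_sum, hsa, hsh]; ring
  have hsc : ∑ r, c r = 1 := by
    simp only [hc]; rw [Finset.sum_add_distrib, ← Finset.mul_sum, hsa, hsh]; ring
  have hsd : ∑ r, d r = 1 := by
    simp only [hd]; rw [Finset.sum_add_distrib, ← Finset.mul_sum, hsa, hsh]; ring
  have hQ : ∀ r, w*a r + (1-w)*b r = w'*c r + (1-w')*d r := by
    intro r
    have e := heqc Finset.univ (Or.inr (Or.inr (by simp))) r (by simp)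
    rw [hsa, hsb, hsc, hsd] at e
    simpa using e
  have hD1 : (1-w)*mb - w'*mc - (1-w')*md = 0 := by
    have e := hQ r0
    rw [hb r0, hc r0, hd r0] at e
    have key : ((1-w)*mb - w'*mc - (1-w')*md) * h r0 = 0 := by linear_combination e
    rcases mul_eq_zero.mp key with h' | h'
    · exact h'
    · exact absurd h' hr0
  have hex1 : ∃ p q, a p * h q - a q * h p ≠ 0 := by
    by_contra hno
    push_neg at hno
    apply hr0
    have key : h r0 = a r0 * ∑ t, h t := by
      rw [Finset.mul_sum]
      have e1 : h r0 = ∑ t, a t * h r0 := by rw [← Finset.sum_mul, hsa, one_mul]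
      rw [e1]
      apply Finset.sum_congr rfl
      intro t _
      linear_combination hno t r0
    rw [key, hsh, mul_zero]
  obtain ⟨p', q', hdet'⟩ := hex1
  obtain ⟨p, q, hdet, hp⟩ : ∃ p q, a p * h q - a q * h p ≠ 0 ∧ h p ≠ 0 := by
    by_cases hp' : h p' = 0
    · refine ⟨q', p', ?_, ?_⟩
      · intro hz; exact hdet' (by linear_combination -hz)
      · intro hz; apply hdet'; rw [hp', hz]; ring
    · exact ⟨p', q', hdet', hp'⟩
  have hpq : p ≠ q := by
    intro hz; apply hdet; rw [hz]; ring
  obtain ⟨r, s, hrs, hrp, hrq, hsp, hsq, _⟩ := fin4_pair_rest p q hpq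
  have hsum4a : a p + a q + a r + a s = 1 := by
    rw [← fin4_sum a p q r s hpq hrp.symm hsp.symm hrq.symm hsq.symm hrs]; exact hsa
  have hsum4h : h p + h q + h r + h s = 0 := by
    rw [← fin4_sum h p q r s hpq hrp.symm hsp.symm hrq.symm hsq.symm hrs]; exact hsh
  have PAIR := pairPencil w w' a h b c d mb mc md hap hbp hcp hdp hb hc hd heqc hD1
  have TRIPLE := triplePencil w w' a h b c d mb mc md hap hbp hcp hdp hb hc hd heqc hD1
  have step : ∀ X1 Y1 X2 Y2 : ℝ,
      (X1*((1-w)*mb^2 - w'*mc^2 - (1-w')*md^2)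
        + Y1*((mb+mc+md)*((1-w)*mb^2 - w'*mc^2 - (1-w')*md^2)
            - ((1-w)*mb^3 - w'*mc^3 - (1-w')*md^3)) = 0) →
      (X2*((1-w)*mb^2 - w'*mc^2 - (1-w')*md^2)
        + Y2*((mb+mc+md)*((1-w)*mb^2 - w'*mc^2 - (1-w')*md^2)
            - ((1-w)*mb^3 - w'*mc^3 - (1-w')*md^3)) = 0) →
      X1*Y2 - X2*Y1 ≠ 0 →
      ((1-w)*mb^2 - w'*mc^2 - (1-w')*md^2) = 0
        ∧ ((1-w)*mb^3 - w'*mc^3 - (1-w')*md^3) = 0 := by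
    intro X1 Y1 X2 Y2 P1 P2 hcr
    obtain ⟨h2, h3⟩ := momentsFromTwo X1 Y1 X2 Y2 _ _ P1 P2 hcr
    exact ⟨h2, by linear_combination (mb+mc+md)*h2 - h3⟩
  have hmom : ((1-w)*mb^2 - w'*mc^2 - (1-w')*md^2) = 0
      ∧ ((1-w)*mb^3 - w'*mc^3 - (1-w')*md^3) = 0 := by
    by_cases hH1 : h p + h q = 0
    · -- case II
      by_cases hr1 : h r = 0
      · -- II.b : also h s = 0
        have hs1 : h s = 0 := by linarith
        refine step (a p + a r + a s) (h p + h r + h s) (a q + a r + a s) (h q + h r + h s)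
          (TRIPLE p r s (Ne.symm hrp) (Ne.symm hsp) hrs
            (by intro hz; apply hp; linarith) ?_)
          (TRIPLE q r s (Ne.symm hrq) (Ne.symm hsq) hrs
            (by intro hz; apply hp; linarith) ?_) ?_
        · intro hz
          have key : h p * (a r + a s) = 0 := by
            linear_combination -hz + (a p)*hr1 + (a p)*hs1
          rcases mul_eq_zero.mp key with h' | h'
          · exact hp h'
          · linarith [hap r, hap s]
        · intro hz
          have key : h p * (a r + a s) = 0 := by
            linear_combination hz - (a q)*hr1 - (a q)*hs1 + (a r + a s)*hH1
          rcases mul_eq_zero.mp key with h' | h'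
          · exact hp h'
          · linarith [hap r, hap s]
        · intro hz
          have key : h p * (a p + a q + 2*(a r + a s)) = 0 := by
            linear_combination -hz + (a p - a q)*hr1 + (a p - a q)*hs1
              + (a p + a r + a s)*hH1
          rcases mul_eq_zero.mp key with h' | h'
          · exact hp h'
          · linarith [hap p, hap q, hap r, hap s]
      · -- II.a : h r ≠ 0, h s = -h r
        have hs2 : h s = -h r := by linarith
        have hY1 : h p + h q + h r ≠ 0 := by intro hz; apply hr1; linarith
        have hY2 : h p + h q + h s ≠ 0 := by intro hz; apply hr1; linarith
        have P1 : (a p + a q + a r)*((1-w)*mb^2 - w'*mc^2 - (1-w')*md^2)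
            + (h p + h q + h r)*((mb+mc+md)*((1-w)*mb^2 - w'*mc^2 - (1-w')*md^2)
                - ((1-w)*mb^3 - w'*mc^3 - (1-w')*md^3)) = 0 := by
          by_cases hn : a p*(h p + h q + h r) - h p*(a p + a q + a r) = 0
          · have hn2 : a q*(h q + h p + h r) - h q*(a q + a p + a r) ≠ 0 := by
              intro hz
              have key : (a p + a q) * h r = 0 := by
                linear_combination hn + hz + (a r)*hH1
              rcases mul_eq_zero.mp key with h' | h'
              · linarith [hap p, hap q]
              · exact hr1 h'
            have := TRIPLE q p r (Ne.symm hpq) (Ne.symm hrq) (Ne.symm hrp)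
              (by intro hz; apply hY1; linarith) hn2
            linear_combination this
          · have := TRIPLE p q r hpq (Ne.symm hrp) (Ne.symm hrq) hY1 hn
            linear_combination this
        have P2 : (a p + a q + a s)*((1-w)*mb^2 - w'*mc^2 - (1-w')*md^2)
            + (h p + h q + h s)*((mb+mc+md)*((1-w)*mb^2 - w'*mc^2 - (1-w')*md^2)
                - ((1-w)*mb^3 - w'*mc^3 - (1-w')*md^3)) = 0 := by
          by_cases hn : a p*(h p + h q + h s) - h p*(a p + a q + a s) = 0
          · have hn2 : a q*(h q + h p + h s) - h q*(a q + a p + a s) ≠ 0 := by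
              intro hz
              have key : (a p + a q) * h r = 0 := by
                linear_combination -hn - hz - (a s)*hH1 + (a p + a q)*hs2
              rcases mul_eq_zero.mp key with h' | h'
              · linarith [hap p, hap q]
              · exact hr1 h'
            have := TRIPLE q p s (Ne.symm hpq) (Ne.symm hsq) (Ne.symm hsp)
              (by intro hz; apply hY2; linarith) hn2
            linear_combination this
          · have := TRIPLE p q s hpq (Ne.symm hsp) (Ne.symm hsq) hY2 hn
            linear_combination this
        refine step _ _ _ _ P1 P2 ?_
        intro hz
        have key : h r * (1 + (a p + a q)) = 0 := by
          linear_combination -hz + (a r - a s)*hH1 + (1 - a s)*hs2 + (h s)*hsum4a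
        rcases mul_eq_zero.mp key with h' | h'
        · exact hr1 h'
        · linarith [hap p, hap q]
    · -- case I : h p + h q ≠ 0
      have P1 := PAIR p q hpq hH1 (by intro hz; exact hdet (by linear_combination hz))
      by_cases dzr : a r*(h r + h s) - h r*(a r + a s) = 0
      · by_cases dzs : a s*(h s + h r) - h s*(a s + a r) = 0
        · -- I.b : both degenerate, use triple {r,p,q} with numerator r
          have hY2 : h r + h p + h q ≠ 0 := by
            intro hz
            have key : h r * a s = 0 := by
              linear_combination (-(a r))*hz - dzr + (a r)*hsum4h
            rcases mul_eq_zero.mp key with h' | h'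
            · apply hH1; linarith
            · linarith [hap s]
          have hdet2 : a r*(h r + h p + h q) - h r*(a r + a p + a q) ≠ 0 := by
            intro hz
            have hr0 : h r = 0 := by
              linear_combination -hz - dzr + (1 - a p - a q - a s)*hsum4h
                + (h p + h q + h s)*hsum4a
            have key : a r*(h p + h q) = 0 := by
              linear_combination hz + (a p + a q)*hr0
            rcases mul_eq_zero.mp key with h' | h'
            · linarith [hap r]
            · exact hH1 h'
          have P2' := TRIPLE r p q (Ne.symm (Ne.symm hrp)) (Ne.symm (Ne.symm hrq)) hpq hY2 hdet2
          have P2 : (a p + a q + a r)*((1-w)*mb^2 - w'*mc^2 - (1-w')*md^2)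
              + (h p + h q + h r)*((mb+mc+md)*((1-w)*mb^2 - w'*mc^2 - (1-w')*md^2)
                  - ((1-w)*mb^3 - w'*mc^3 - (1-w')*md^3)) = 0 := by
            linear_combination P2'
          refine step _ _ _ _ P1 P2 ?_
          intro hz
          have hr0 : h r = 0 := by
            linear_combination hz - dzr + (1 - a p - a q - a s)*hsum4h
              + (h p + h q + h s)*hsum4a
          have key : a r*(h p + h q) = 0 := by
            linear_combination -hz + (a p + a q)*hr0
          rcases mul_eq_zero.mp key with h' | h'
          · linarith [hap r]
          · exact hH1 h'
        · -- numerator s works for pair {r,s}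
          have hY2 : h s + h r ≠ 0 := by intro hz; apply hH1; linarith
          have P2' := PAIR s r (Ne.symm hrs) hY2 dzs
          have P2 : (a r + a s)*((1-w)*mb^2 - w'*mc^2 - (1-w')*md^2)
              + (h r + h s)*((mb+mc+md)*((1-w)*mb^2 - w'*mc^2 - (1-w')*md^2)
                  - ((1-w)*mb^3 - w'*mc^3 - (1-w')*md^3)) = 0 := by
            linear_combination P2'
          refine step _ _ _ _ P1 P2 ?_
          intro hz
          apply hH1
          linear_combination -hz - (h p + h q)*hsum4a + (a p + a q)*hsum4h
      · -- numerator r works for pair {r,s}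
        have hY2 : h r + h s ≠ 0 := by intro hz; apply hH1; linarith
        have P2 := PAIR r s hrs hY2 dzr
        refine step _ _ _ _ P1 P2 ?_
        intro hz
        apply hH1
        linear_combination -hz - (h p + h q)*hsum4a + (a p + a q)*hsum4h
  obtain ⟨hD2, hD3⟩ := hmom
  have final := oneD w w' 0 mb mc md hw0 hw1 hw0' hw1'
    (by linear_combination hD1) (by linear_combination hD2) (by linear_combination hD3)
  rcases final with ⟨hmc, hmd, hcl⟩ | ⟨hmc, hmd, hcl⟩
  · left
    refine ⟨?_, ?_, ?_⟩
    · funext t; rw [hc t, hmc]; ring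
    · funext t; rw [hd t, hb t, hmd]
    · rcases hcl with hw | hmb
      · exact Or.inl hw
      · exact Or.inr (by funext t; rw [hb t, ← hmb]; ring)
  · right
    refine ⟨?_, ?_, ?_⟩
    · funext t; rw [hc t, hb t, hmc]
    · funext t; rw [hd t, hmd]; ring
    · rcases hcl with hw | hmb
      · exact Or.inl hw
      · exact Or.inr (by funext t; rw [hb t, ← hmb]; ring)

lemma ltOne (x : Fin 4 → ℝ) (hx : ∀ r, 0 < x r) (hs : ∑ r, x r = 1) (l : Fin 4) :
    x l < 1 := by
  rw [Fin.sum_univ_four] at hs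
  have h0 := hx 0; have h1 := hx 1; have h2 := hx 2; have h3 := hx 3
  fin_cases l <;> simp <;> linarith

lemma depOf (x y : Fin 4 → ℝ) (hnx : x ≠ 0)
    (hni : ¬(∀ pp qq : ℝ, (∀ r, pp*x r + qq*y r = 0) → pp = 0 ∧ qq = 0)) :
    ∃ t, ∀ r, y r = t * x r := by
  push_neg at hni
  obtain ⟨pp, qq, hrel, hne⟩ := hni
  by_cases hq : qq = 0
  · exfalso
    subst hq
    have hpp : pp ≠ 0 := fun hz => hne hz rfl
    apply hnx
    funext r
    have := hrel r
    have : pp * x r = 0 := by linarith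
    rcases mul_eq_zero.mp this with h | h
    · exact absurd h hpp
    · exact h
  · refine ⟨-pp/qq, fun r => ?_⟩
    have := hrel r
    field_simp
    linarith

lemma twoEpsZero (w w' : ℝ) (hw1' : w' < 1)
    (a b c d : Fin 4 → ℝ) (hap : ∀ r, 0 < a r)
    (X1 X2 X3 X4 ε : Fin 4 → ℝ)
    (hε : ∀ l, ε l = X1 l*a l + X2 l*b l + X3 l*c l + X4 l*d l)
    (hQ : ∀ r, w*a r + (1-w)*b r = w'*c r + (1-w')*d r)
    (hvec : ∀ l r, r ≠ l → X1 l*a r + X2 l*b r + X3 l*c r + X4 l*d r = 0) :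
    ∃ l1 l2, l1 ≠ l2 ∧ ε l1 = 0 ∧ ε l2 = 0 := by
  classical
  by_contra hno
  push_neg at hno
  obtain ⟨i, j, k, hij, hik, hjk, hei, hej, hek⟩ :
      ∃ i j k : Fin 4, i ≠ j ∧ i ≠ k ∧ j ≠ k ∧ ε i ≠ 0 ∧ ε j ≠ 0 ∧ ε k ≠ 0 := by
    by_cases h0 : ε 0 = 0
    · exact ⟨1, 2, 3, by decide, by decide, by decide,
        hno 0 1 (by decide) h0, hno 0 2 (by decide) h0, hno 0 3 (by decide) h0⟩
    · by_cases h1 : ε 1 = 0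
      · exact ⟨0, 2, 3, by decide, by decide, by decide,
          h0, hno 1 2 (by decide) h1, hno 1 3 (by decide) h1⟩
      · by_cases h2 : ε 2 = 0
        · exact ⟨0, 1, 3, by decide, by decide, by decide, h0, h1, hno 2 3 (by decide) h2⟩
        · exact ⟨0, 1, 2, by decide, by decide, by decide, h0, h1, h2⟩
  obtain ⟨l0, hl0i, hl0j, hl0k, hcov⟩ := fin4_triple_rest i j k hij hik hjk
  set W := Submodule.span ℝ ({a, b, c} : Set (Fin 4 → ℝ)) with hW
  have haW : a ∈ W := Submodule.subset_span (by simp)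
  have hbW : b ∈ W := Submodule.subset_span (by simp)
  have hcW : c ∈ W := Submodule.subset_span (by simp)
  have h1w' : (1:ℝ) - w' ≠ 0 := by intro hz; exact absurd (by linarith : w' = 1) (ne_of_lt hw1')
  have hdW : d ∈ W := by
    have hde : d = ((1-w')⁻¹ * w) • a + ((1-w')⁻¹ * (1-w)) • b + (-((1-w')⁻¹ * w')) • c := by
      funext r
      have hq := hQ r
      simp only [Pi.add_apply, Pi.smul_apply, smul_eq_mul]
      field_simp
      linarith
    rw [hde]
    exact Submodule.add_mem _ (Submodule.add_mem _ (Submodule.smul_mem _ _ haW)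
      (Submodule.smul_mem _ _ hbW)) (Submodule.smul_mem _ _ hcW)
  set E : Fin 4 → (Fin 4 → ℝ) := fun l => fun r => if r = l then 1 else 0 with hE
  have hEW : ∀ l, ε l ≠ 0 → E l ∈ W := by
    intro l hl
    have hFW : (fun r => X1 l*a r + X2 l*b r + X3 l*c r + X4 l*d r) ∈ W := by
      have hfe : (fun r => X1 l*a r + X2 l*b r + X3 l*c r + X4 l*d r)
          = X1 l • a + X2 l • b + (X3 l • c + X4 l • d) := by
        funext r
        simp only [Pi.add_apply, Pi.smul_apply, smul_eq_mul]
        ring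
      rw [hfe]
      exact Submodule.add_mem _ (Submodule.add_mem _ (Submodule.smul_mem _ _ haW)
        (Submodule.smul_mem _ _ hbW)) (Submodule.add_mem _ (Submodule.smul_mem _ _ hcW)
        (Submodule.smul_mem _ _ hdW))
    have hEe : E l = (ε l)⁻¹ • (fun r => X1 l*a r + X2 l*b r + X3 l*c r + X4 l*d r) := by
      funext r
      by_cases hr : r = l
      · subst hr
        simp only [hE, if_pos rfl, Pi.smul_apply, smul_eq_mul]
        rw [← hε r]
        exact (inv_mul_cancel₀ hl).symm
      · simp only [hE, if_neg hr, Pi.smul_apply, smul_eq_mul, hvec l r hr, mul_zero]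
    rw [hEe]
    exact Submodule.smul_mem _ _ hFW
  have hEl0 : E l0 ∈ W := by
    have key : E l0 = (a l0)⁻¹ • (a - a i • E i - a j • E j - a k • E k) := by
      funext r
      have hal0 : a l0 ≠ 0 := ne_of_gt (hap l0)
      rcases hcov r with h|h|h|h <;> rw [h]
      · simp [hE, hij, hik, Ne.symm hl0i]
      · simp [hE, Ne.symm hij, hjk, Ne.symm hl0j]
      · simp [hE, Ne.symm hik, Ne.symm hjk, Ne.symm hl0k]
      · simp [hE, hl0i, hl0j, hl0k]
        field_simp
    rw [key]
    exact Submodule.smul_mem _ _ (Submodule.sub_mem _ (Submodule.sub_mem _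
      (Submodule.sub_mem _ haW (Submodule.smul_mem _ _ (hEW i hei)))
      (Submodule.smul_mem _ _ (hEW j hej))) (Submodule.smul_mem _ _ (hEW k hek)))
  have htop : ∀ x : Fin 4 → ℝ, x ∈ W := by
    intro x
    have hx : x = x i • E i + x j • E j + x k • E k + x l0 • E l0 := by
      funext r
      rcases hcov r with h|h|h|h <;> rw [h]
      · simp [hE, hij, hik, Ne.symm hl0i]
      · simp [hE, Ne.symm hij, hjk, Ne.symm hl0j]
      · simp [hE, Ne.symm hik, Ne.symm hjk, Ne.symm hl0k]
      · simp [hE, hl0i, hl0j, hl0k]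
    rw [hx]
    exact Submodule.add_mem _ (Submodule.add_mem _ (Submodule.add_mem _
      (Submodule.smul_mem _ _ (hEW i hei)) (Submodule.smul_mem _ _ (hEW j hej)))
      (Submodule.smul_mem _ _ (hEW k hek))) (Submodule.smul_mem _ _ hEl0)
  have hWtop : W = ⊤ := eq_top_iff.mpr fun x _ => htop x
  have hle : Module.finrank ℝ (Fin 4 → ℝ) ≤ ({a, b, c} : Set (Fin 4 → ℝ)).toFinset.card := by
    conv_lhs => rw [← finrank_top ℝ (Fin 4 → ℝ), ← hWtop]
    exact finrank_span_le_card _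
  have hcard : ({a, b, c} : Set (Fin 4 → ℝ)).toFinset.card ≤ 3 := by
    simp only [Set.toFinset_insert, Set.toFinset_singleton]
    refine le_trans (Finset.card_insert_le _ _) ?_
    have := Finset.card_insert_le b ({c} : Finset (Fin 4 → ℝ))
    simp at this ⊢
    omega
  have hfr : Module.finrank ℝ (Fin 4 → ℝ) = 4 := Module.finrank_fin_fun ℝ
  omega

lemma eqOfMulFac (P x y : ℝ) (hP : 0 < P) (h : P*(x-y) = 0) : x = y := by
  rcases mul_eq_zero.mp h with h' | h'
  · exact absurd h' (ne_of_gt hP)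
  · linarith [sub_eq_zero.mp h']

lemma lineFromCommon (a b c d : Fin 4 → ℝ)
    (hsa : ∑ r, a r = 1) (hsb : ∑ r, b r = 1) (hsc : ∑ r, c r = 1) (hsd : ∑ r, d r = 1)
    (l1 l2 : Fin 4) (hne : l1 ≠ l2)
    (h1 : b l1 = a l1 ∧ c l1 = a l1 ∧ d l1 = a l1)
    (h2 : b l2 = a l2 ∧ c l2 = a l2 ∧ d l2 = a l2) :
    ∃ (h : Fin 4 → ℝ) (mb mc md : ℝ),
      (∀ r, b r = a r + mb*h r) ∧ (∀ r, c r = a r + mc*h r) ∧ (∀ r, d r = a r + md*h r) := by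
  obtain ⟨r1, r2, hr12, hr1l1, hr1l2, hr2l1, hr2l2, hcov⟩ := fin4_pair_rest l1 l2 hne
  have key : ∀ (x : Fin 4 → ℝ), x l1 = a l1 → x l2 = a l2 → (∑ r, x r = 1) →
      ∀ t, x t = a t + (x r1 - a r1)*(if t = r1 then (1:ℝ) else if t = r2 then -1 else 0) := by
    intro x hx1 hx2 hsx t
    have Sa := fin4_sum a l1 l2 r1 r2 hne (Ne.symm hr1l1) (Ne.symm hr2l1)
      (Ne.symm hr1l2) (Ne.symm hr2l2) hr12
    have Sx := fin4_sum x l1 l2 r1 r2 hne (Ne.symm hr1l1) (Ne.symm hr2l1)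
      (Ne.symm hr1l2) (Ne.symm hr2l2) hr12
    rw [hsa] at Sa
    rw [hsx] at Sx
    rcases hcov t with h|h|h|h <;> rw [h]
    · rw [if_neg (Ne.symm hr1l1), if_neg (Ne.symm hr2l1)]
      rw [hx1]; ring
    · rw [if_neg (Ne.symm hr1l2), if_neg (Ne.symm hr2l2)]
      rw [hx2]; ring
    · rw [if_pos rfl]; ring
    · rw [if_neg (Ne.symm hr12), if_pos rfl]
      linarith
  exact ⟨fun t => if t = r1 then (1:ℝ) else if t = r2 then -1 else 0,
    b r1 - a r1, c r1 - a r1, d r1 - a r1,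
    key b h1.1 h2.1 hsb, key c h1.2.1 h2.2.1 hsc, key d h1.2.2 h2.2.2 hsd⟩

/-- Coefficients of the derived vector relations. -/
def GX1 (w w' : ℝ) (a b c d : Fin 4 → ℝ) (l : Fin 4) : ℝ :=
  w*(a l*((1-b l)*((1-c l)*(1-d l))))
def GX2 (w w' : ℝ) (a b c d : Fin 4 → ℝ) (l : Fin 4) : ℝ :=
  (1-w)*(b l*((1-a l)*((1-c l)*(1-d l))))
def GX3 (w w' : ℝ) (a b c d : Fin 4 → ℝ) (l : Fin 4) : ℝ :=
  -(w'*(c l*((1-a l)*((1-b l)*(1-d l)))))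
def GX4 (w w' : ℝ) (a b c d : Fin 4 → ℝ) (l : Fin 4) : ℝ :=
  -((1-w')*(d l*((1-a l)*((1-b l)*(1-c l)))))
def Geps (w w' : ℝ) (a b c d : Fin 4 → ℝ) (l : Fin 4) : ℝ :=
  GX1 w w' a b c d l * a l + GX2 w w' a b c d l * b l
    + GX3 w w' a b c d l * c l + GX4 w w' a b c d l * d l

lemma toLine (w w' : ℝ) (hw0 : 0 < w) (hw1 : w < 1) (hw0' : 0 < w') (hw1' : w' < 1)
    (a b c d : Fin 4 → ℝ)
    (hap : ∀ r, 0 < a r) (hbp : ∀ r, 0 < b r) (hcp : ∀ r, 0 < c r) (hdp : ∀ r, 0 < d r)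
    (hsa : ∑ r, a r = 1) (hsb : ∑ r, b r = 1) (hsc : ∑ r, c r = 1) (hsd : ∑ r, d r = 1)
    (hQ : ∀ r, w*a r + (1-w)*b r = w'*c r + (1-w')*d r)
    (hG : ∀ l r, r ≠ l →
      GX1 w w' a b c d l * a r + GX2 w w' a b c d l * b r
        + GX3 w w' a b c d l * c r + GX4 w w' a b c d l * d r = 0) :
    ∃ (h : Fin 4 → ℝ) (mb mc md : ℝ),
      (∀ r, b r = a r + mb*h r) ∧ (∀ r, c r = a r + mc*h r) ∧ (∀ r, d r = a r + md*h r) := by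
  classical
  obtain ⟨l1, l2, hl12, he1, he2⟩ := twoEpsZero w w' hw1' a b c d hap
    (GX1 w w' a b c d) (GX2 w w' a b c d) (GX3 w w' a b c d) (GX4 w w' a b c d)
    (Geps w w' a b c d) (fun l => rfl) hQ hG
  -- shared pieces
  have hvec : ∀ l, Geps w w' a b c d l = 0 → ∀ r,
      GX1 w w' a b c d l * a r + GX2 w w' a b c d l * b r
        + GX3 w w' a b c d l * c r + GX4 w w' a b c d l * d r = 0 := by
    intro l hl r
    by_cases hrl : r = l
    · rw [hrl]; exact hl
    · exact hG l r hrl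
  have hxs : ∀ l, Geps w w' a b c d l = 0 →
      GX1 w w' a b c d l + GX2 w w' a b c d l + GX3 w w' a b c d l + GX4 w w' a b c d l = 0 := by
    intro l hl
    have hsum0 : ∑ r, (GX1 w w' a b c d l * a r + GX2 w w' a b c d l * b r
        + GX3 w w' a b c d l * c r + GX4 w w' a b c d l * d r) = 0 :=
      Finset.sum_eq_zero (fun r _ => hvec l hl r)
    rw [Finset.sum_add_distrib, Finset.sum_add_distrib, Finset.sum_add_distrib,
      ← Finset.mul_sum, ← Finset.mul_sum, ← Finset.mul_sum, ← Finset.mul_sum,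
      hsa, hsb, hsc, hsd] at hsum0
    linarith
  have hw'ne : -(1-w') ≠ 0 := by intro hz; linarith
  have hwne : -w' ≠ 0 := by intro hz; linarith
  have h1wne : (1-w) ≠ 0 := by intro hz; linarith
  -- the three independence cases give common coordinates
  have commonOf1 : (∀ pp qq : ℝ, (∀ r, pp*(b r - a r) + qq*(c r - a r) = 0) → pp = 0 ∧ qq = 0) →
      ∀ l, Geps w w' a b c d l = 0 → b l = a l ∧ c l = a l ∧ d l = a l := by
    intro hInd l hl
    have ha1 := ltOne a hap hsa l
    have hb1 := ltOne b hbp hsb l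
    have hc1 := ltOne c hcp hsc l
    have hd1 := ltOne d hdp hsd l
    obtain ⟨E1, E2, E3⟩ := uniqRel a b c d w (1-w) (-w') (-(1-w'))
      (fun r => by linear_combination hQ r) (by ring) hw'ne hInd
      (GX1 w w' a b c d l) (GX2 w w' a b c d l) (GX3 w w' a b c d l) (GX4 w w' a b c d l)
      (hvec l hl) (hxs l hl)
    simp only [GX1, GX2, GX3, GX4] at E1 E2 E3
    have k1 : (w*((1-w')*((1-b l)*(1-c l)))) * (a l - d l) = 0 := by linear_combination -E1
    have k2 : ((1-w)*((1-w')*((1-a l)*(1-c l)))) * (b l - d l) = 0 := by linear_combination -E2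
    have k3 : (w'*((1-w')*((1-a l)*(1-b l)))) * (c l - d l) = 0 := by linear_combination E3
    have q1 := eqOfMulFac _ _ _ (mul_pos hw0 (mul_pos (by linarith) (mul_pos (by linarith) (by linarith)))) k1
    have q2 := eqOfMulFac _ _ _ (mul_pos (by linarith) (mul_pos (by linarith) (mul_pos (by linarith) (by linarith)))) k2
    have q3 := eqOfMulFac _ _ _ (mul_pos hw0' (mul_pos (by linarith) (mul_pos (by linarith) (by linarith)))) k3
    exact ⟨by linarith, by linarith, by linarith⟩
  have commonOf2 : (∀ pp qq : ℝ, (∀ r, pp*(b r - a r) + qq*(d r - a r) = 0) → pp = 0 ∧ qq = 0) →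
      ∀ l, Geps w w' a b c d l = 0 → b l = a l ∧ c l = a l ∧ d l = a l := by
    intro hInd l hl
    have ha1 := ltOne a hap hsa l
    have hb1 := ltOne b hbp hsb l
    have hc1 := ltOne c hcp hsc l
    have hd1 := ltOne d hdp hsd l
    obtain ⟨E1, E2, E3⟩ := uniqRel a b d c w (1-w) (-(1-w')) (-w')
      (fun r => by linear_combination hQ r) (by ring) hwne hInd
      (GX1 w w' a b c d l) (GX2 w w' a b c d l) (GX4 w w' a b c d l) (GX3 w w' a b c d l)
      (fun r => by linear_combination hvec l hl r) (by linarith [hxs l hl])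
    simp only [GX1, GX2, GX3, GX4] at E1 E2 E3
    have k1 : (w*(w'*((1-b l)*(1-d l)))) * (a l - c l) = 0 := by linear_combination -E1
    have k2 : ((1-w)*(w'*((1-a l)*(1-d l)))) * (b l - c l) = 0 := by linear_combination -E2
    have k3 : ((1-w')*(w'*((1-a l)*(1-b l)))) * (d l - c l) = 0 := by linear_combination E3
    have q1 := eqOfMulFac _ _ _ (mul_pos hw0 (mul_pos hw0' (mul_pos (by linarith) (by linarith)))) k1
    have q2 := eqOfMulFac _ _ _ (mul_pos (by linarith) (mul_pos hw0' (mul_pos (by linarith) (by linarith)))) k2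
    have q3 := eqOfMulFac _ _ _ (mul_pos (by linarith) (mul_pos hw0' (mul_pos (by linarith) (by linarith)))) k3
    exact ⟨by linarith, by linarith, by linarith⟩
  have commonOf3 : (∀ pp qq : ℝ, (∀ r, pp*(c r - a r) + qq*(d r - a r) = 0) → pp = 0 ∧ qq = 0) →
      ∀ l, Geps w w' a b c d l = 0 → b l = a l ∧ c l = a l ∧ d l = a l := by
    intro hInd l hl
    have ha1 := ltOne a hap hsa l
    have hb1 := ltOne b hbp hsb l
    have hc1 := ltOne c hcp hsc l
    have hd1 := ltOne d hdp hsd l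
    obtain ⟨E1, E2, E3⟩ := uniqRel a c d b w (-w') (-(1-w')) (1-w)
      (fun r => by linear_combination hQ r) (by ring) h1wne hInd
      (GX1 w w' a b c d l) (GX3 w w' a b c d l) (GX4 w w' a b c d l) (GX2 w w' a b c d l)
      (fun r => by linear_combination hvec l hl r) (by linarith [hxs l hl])
    simp only [GX1, GX2, GX3, GX4] at E1 E2 E3
    have k1 : (w*((1-w)*((1-c l)*(1-d l)))) * (a l - b l) = 0 := by linear_combination E1
    have k2 : (w'*((1-w)*((1-a l)*(1-d l)))) * (c l - b l) = 0 := by linear_combination -E2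
    have k3 : ((1-w')*((1-w)*((1-a l)*(1-c l)))) * (d l - b l) = 0 := by linear_combination -E3
    have q1 := eqOfMulFac _ _ _ (mul_pos hw0 (mul_pos (by linarith) (mul_pos (by linarith) (by linarith)))) k1
    have q2 := eqOfMulFac _ _ _ (mul_pos hw0' (mul_pos (by linarith) (mul_pos (by linarith) (by linarith)))) k2
    have q3 := eqOfMulFac _ _ _ (mul_pos (by linarith) (mul_pos (by linarith) (mul_pos (by linarith) (by linarith)))) k3
    exact ⟨by linarith, by linarith, by linarith⟩
  -- case analysis to find a line or an independent pair
  by_cases hba : b = a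
  · by_cases hca : c = a
    · refine ⟨fun r => d r - a r, 0, 0, 1, ?_, ?_, ?_⟩ <;> intro r
      · rw [hba]; ring
      · rw [hca]; ring
      · ring
    · by_cases hIvz : ∀ pp qq : ℝ, (∀ r, pp*(c r - a r) + qq*(d r - a r) = 0) → pp = 0 ∧ qq = 0
      · exact lineFromCommon a b c d hsa hsb hsc hsd l1 l2 hl12
          (commonOf3 hIvz l1 he1) (commonOf3 hIvz l2 he2)
      · have hvne : (fun r => c r - a r) ≠ 0 := by
          intro hz
          apply hca
          funext r
          have := congrFun hz r
          simp at this
          linarith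
        obtain ⟨t, ht⟩ := depOf (fun r => c r - a r) (fun r => d r - a r) hvne hIvz
        refine ⟨fun r => c r - a r, 0, 1, t, ?_, ?_, ?_⟩ <;> intro r
        · rw [hba]; ring
        · ring
        · have := ht r; show d r = a r + t * (c r - a r); linarith
  · have hune : (fun r => b r - a r) ≠ 0 := by
      intro hz
      apply hba
      funext r
      have := congrFun hz r
      simp at this
      linarith
    by_cases hIuv : ∀ pp qq : ℝ, (∀ r, pp*(b r - a r) + qq*(c r - a r) = 0) → pp = 0 ∧ qq = 0
    · exact lineFromCommon a b c d hsa hsb hsc hsd l1 l2 hl12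
        (commonOf1 hIuv l1 he1) (commonOf1 hIuv l2 he2)
    · obtain ⟨tv, htv⟩ := depOf (fun r => b r - a r) (fun r => c r - a r) hune hIuv
      by_cases hIuz : ∀ pp qq : ℝ, (∀ r, pp*(b r - a r) + qq*(d r - a r) = 0) → pp = 0 ∧ qq = 0
      · exact lineFromCommon a b c d hsa hsb hsc hsd l1 l2 hl12
          (commonOf2 hIuz l1 he1) (commonOf2 hIuz l2 he2)
      · obtain ⟨tz, htz⟩ := depOf (fun r => b r - a r) (fun r => d r - a r) hune hIuz
        refine ⟨fun r => b r - a r, 1, tv, tz, ?_, ?_, ?_⟩ <;> intro r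
        · ring
        · have := htv r; show c r = a r + tv * (b r - a r); linarith
        · have := htz r; show d r = a r + tz * (b r - a r); linarith

lemma core (w w' : ℝ) (hw0 : 0 < w) (hw1 : w < 1) (hw0' : 0 < w') (hw1' : w' < 1)
    (a b c d : Fin 4 → ℝ)
    (hap : ∀ r, 0 < a r) (hbp : ∀ r, 0 < b r) (hcp : ∀ r, 0 < c r) (hdp : ∀ r, 0 < d r)
    (hsa : ∑ r, a r = 1) (hsb : ∑ r, b r = 1) (hsc : ∑ r, c r = 1) (hsd : ∑ r, d r = 1)
    (heqc : ∀ S : Finset (Fin 4), (S.card = 2 ∨ S.card = 3 ∨ S.card = 4) → ∀ i ∈ S,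
      w * (a i / ∑ t ∈ S, a t) + (1-w) * (b i / ∑ t ∈ S, b t)
        = w' * (c i / ∑ t ∈ S, c t) + (1-w') * (d i / ∑ t ∈ S, d t)) :
    (c = a ∧ d = b ∧ (w' = w ∨ b = a)) ∨ (c = b ∧ d = a ∧ (w' = 1 - w ∨ b = a)) := by
  have hQ : ∀ r, w*a r + (1-w)*b r = w'*c r + (1-w')*d r := by
    intro r
    have e := heqc Finset.univ (Or.inr (Or.inr (by simp))) r (by simp)
    rw [hsa, hsb, hsc, hsd] at e
    simpa using e
  have hse : ∀ x : Fin 4 → ℝ, (∑ t, x t = 1) → ∀ l,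
      ∑ t ∈ Finset.univ.erase l, x t = 1 - x l := by
    intro x hx l
    rw [Finset.sum_erase_eq_sub (Finset.mem_univ l), hx]
  have hcard : ∀ l : Fin 4, (Finset.univ.erase l).card = 3 := by
    intro l
    rw [Finset.card_erase_of_mem (Finset.mem_univ l)]
    simp
  have hT : ∀ l r, r ≠ l →
      w*(a r/(1 - a l)) + (1-w)*(b r/(1 - b l))
        = w'*(c r/(1 - c l)) + (1-w')*(d r/(1 - d l)) := by
    intro l r hrl
    have e := heqc (Finset.univ.erase l) (Or.inr (Or.inl (hcard l))) r
      (Finset.mem_erase.mpr ⟨hrl, Finset.mem_univ r⟩)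
    rw [hse a hsa l, hse b hsb l, hse c hsc l, hse d hsd l] at e
    exact e
  have hG : ∀ l r, r ≠ l →
      GX1 w w' a b c d l * a r + GX2 w w' a b c d l * b r
        + GX3 w w' a b c d l * c r + GX4 w w' a b c d l * d r = 0 := by
    intro l r hrl
    have e := hT l r hrl
    have q := hQ r
    have h1 : (1:ℝ) - a l ≠ 0 := ne_of_gt (by linarith [ltOne a hap hsa l])
    have h2 : (1:ℝ) - b l ≠ 0 := ne_of_gt (by linarith [ltOne b hbp hsb l])
    have h3 : (1:ℝ) - c l ≠ 0 := ne_of_gt (by linarith [ltOne c hcp hsc l])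
    have h4 : (1:ℝ) - d l ≠ 0 := ne_of_gt (by linarith [ltOne d hdp hsd l])
    field_simp at e
    simp only [GX1, GX2, GX3, GX4]
    linear_combination e - ((1-a l)*((1-b l)*((1-c l)*(1-d l))))*q
  obtain ⟨h, mb, mc, md, hb, hc, hd⟩ := toLine w w' hw0 hw1 hw0' hw1' a b c d
    hap hbp hcp hdp hsa hsb hsc hsd hQ hG
  have callMaster : ∀ (m0 : ℝ), (m0 = mb ∨ m0 = mc ∨ m0 = md) → (∃ r, m0 * h r ≠ 0) →
      (c = a ∧ d = b ∧ (w' = w ∨ b = a)) ∨ (c = b ∧ d = a ∧ (w' = 1 - w ∨ b = a)) := by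
    rintro m0 hm0 ⟨r1, hr1⟩
    have hm0ne : m0 ≠ 0 := fun hzz => hr1 (by rw [hzz]; ring)
    have hhne : h r1 ≠ 0 := fun hzz => hr1 (by rw [hzz]; ring)
    have hsx : ∑ r, (a r + m0*h r) = 1 := by
      rcases hm0 with h0|h0|h0 <;> subst h0
      · rw [← hsb]; exact Finset.sum_congr rfl (fun r _ => (hb r).symm)
      · rw [← hsc]; exact Finset.sum_congr rfl (fun r _ => (hc r).symm)
      · rw [← hsd]; exact Finset.sum_congr rfl (fun r _ => (hd r).symm)
    have hsh : ∑ r, h r = 0 := by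
      have key : m0 * ∑ r, h r = 0 := by
        rw [Finset.sum_add_distrib, ← Finset.mul_sum, hsa] at hsx
        linarith
      rcases mul_eq_zero.mp key with h'|h'
      · exact absurd h' hm0ne
      · exact h'
    exact master w w' hw0 hw1 hw0' hw1' a h b c d mb mc md hap hbp hcp hdp hsa hsh
      ⟨r1, hhne⟩ hb hc hd heqc
  by_cases hz1 : ∀ r, mb * h r = 0
  · by_cases hz2 : ∀ r, mc * h r = 0
    · by_cases hz3 : ∀ r, md * h r = 0
      · have hbeq : b = a := funext fun r => by rw [hb r, hz1 r]; ring
        have hceq : c = a := funext fun r => by rw [hc r, hz2 r]; ring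
        have hdeq : d = a := funext fun r => by rw [hd r, hz3 r]; ring
        exact Or.inl ⟨hceq, hdeq.trans hbeq.symm, Or.inr hbeq⟩
      · push_neg at hz3; exact callMaster md (Or.inr (Or.inr rfl)) hz3
    · push_neg at hz2; exact callMaster mc (Or.inr (Or.inl rfl)) hz2
  · push_neg at hz1; exact callMaster mb (Or.inl rfl) hz1

lemma crossHelp (u v u' v' σ σ' : ℝ) (hσ : 0 < σ) (hσ' : 0 < σ')
    (h1 : u' * σ = u * σ') (h2 : v' * σ = v * σ') : u * v' = v * u' := by
  have key : (σ*σ')*(u*v' - v*u') = 0 := by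
    linear_combination (σ'*u)*h2 - (σ'*v)*h1
  have := eqOfMulFac _ _ _ (mul_pos hσ hσ') key
  linarith

lemma corAt (m : ℕ) (α α' : ℝ) (hα0 : 0 < α) (hα1 : α < 1) (hα'0 : 0 < α') (hα'1 : α' < 1)
    (θ1 θ2 θ1' θ2' : Fin m → ℝ)
    (hp1 : ∀ i, 0 < θ1 i) (hp2 : ∀ i, 0 < θ2 i) (hp1' : ∀ i, 0 < θ1' i) (hp2' : ∀ i, 0 < θ2' i)
    (heq : ∀ A' : Finset (Fin m), (A'.card = 2 ∨ A'.card = 3 ∨ A'.card = 4) →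
      ∀ a ∈ A',
        α * PLchoice θ1 A' a + (1 - α) * PLchoice θ2 A' a
          = α' * PLchoice θ1' A' a + (1 - α') * PLchoice θ2' A' a)
    (i0 i1 i2 i3 : Fin m) (h01 : i0 ≠ i1) (h02 : i0 ≠ i2) (h03 : i0 ≠ i3)
    (h12 : i1 ≠ i2) (h13 : i1 ≠ i3) (h23 : i2 ≠ i3) :
    ((∀ x ∈ ({i0,i1,i2,i3} : Finset (Fin m)), ∀ y ∈ ({i0,i1,i2,i3} : Finset (Fin m)),
        θ1 x * θ1' y = θ1 y * θ1' x ∧ θ2 x * θ2' y = θ2 y * θ2' x)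
      ∧ (α' = α ∨ ∀ x ∈ ({i0,i1,i2,i3} : Finset (Fin m)),
          ∀ y ∈ ({i0,i1,i2,i3} : Finset (Fin m)), θ1 x * θ2 y = θ1 y * θ2 x))
    ∨ ((∀ x ∈ ({i0,i1,i2,i3} : Finset (Fin m)), ∀ y ∈ ({i0,i1,i2,i3} : Finset (Fin m)),
        θ2 x * θ1' y = θ2 y * θ1' x ∧ θ1 x * θ2' y = θ1 y * θ2' x)
      ∧ (α' = 1 - α ∨ ∀ x ∈ ({i0,i1,i2,i3} : Finset (Fin m)),
          ∀ y ∈ ({i0,i1,i2,i3} : Finset (Fin m)), θ1 x * θ2 y = θ1 y * θ2 x)) := by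
  have hinj0 : Function.Injective ![i0, i1, i2, i3] := by
    intro x y hxy
    fin_cases x <;> fin_cases y <;> simp_all [Fin.isValue]
  set f : Fin 4 → Fin m := ![i0, i1, i2, i3] with hf
  have hinj : Function.Injective f := hinj0
  have hTf : ∀ x ∈ ({i0,i1,i2,i3} : Finset (Fin m)), ∃ t, f t = x := by
    intro x hx
    simp only [Finset.mem_insert, Finset.mem_singleton] at hx
    rcases hx with h|h|h|h
    · exact ⟨0, by simp [hf, h]⟩
    · exact ⟨1, by simp [hf, h]⟩
    · exact ⟨2, by simp [hf, h]⟩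
    · exact ⟨3, by simp [hf, h]⟩
  have sumpos : ∀ (x : Fin m → ℝ), (∀ i, 0 < x i) → 0 < ∑ t, x (f t) :=
    fun x hx => Finset.sum_pos (fun t _ => hx (f t)) Finset.univ_nonempty
  have hσa := sumpos θ1 hp1
  have hσb := sumpos θ2 hp2
  have hσc := sumpos θ1' hp1'
  have hσd := sumpos θ2' hp2'
  set A : Fin 4 → ℝ := fun t => θ1 (f t) / (∑ t, θ1 (f t)) with hA
  set B : Fin 4 → ℝ := fun t => θ2 (f t) / (∑ t, θ2 (f t)) with hB
  set C : Fin 4 → ℝ := fun t => θ1' (f t) / (∑ t, θ1' (f t)) with hC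
  set D : Fin 4 → ℝ := fun t => θ2' (f t) / (∑ t, θ2' (f t)) with hD
  have hnorm : ∀ (x : Fin m → ℝ), (∀ i, 0 < x i) →
      ∑ t, (x (f t) / (∑ t', x (f t'))) = 1 := by
    intro x hx
    rw [← Finset.sum_div, div_self (ne_of_gt (sumpos x hx))]
  have hratio : ∀ (x : Fin m → ℝ), (∀ i, 0 < x i) → ∀ (S : Finset (Fin 4)), S.Nonempty →
      ∀ i ∈ S, (x (f i) / (∑ t', x (f t'))) / (∑ t ∈ S, (x (f t) / (∑ t', x (f t'))))
        = x (f i) / ∑ t ∈ S, x (f t) := by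
    intro x hx S hSne i _
    rw [← Finset.sum_div, div_div_div_comm, div_self (ne_of_gt (sumpos x hx)), div_one]
  have heqc : ∀ S : Finset (Fin 4), (S.card = 2 ∨ S.card = 3 ∨ S.card = 4) → ∀ i ∈ S,
      α * (A i / ∑ t ∈ S, A t) + (1-α) * (B i / ∑ t ∈ S, B t)
        = α' * (C i / ∑ t ∈ S, C t) + (1-α') * (D i / ∑ t ∈ S, D t) := by
    intro S hcard i hiS
    have hSne : S.Nonempty := by
      rw [← Finset.card_pos]
      rcases hcard with h|h|h <;> omega
    have himg : (S.image f).card = 2 ∨ (S.image f).card = 3 ∨ (S.image f).card = 4 := by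
      rw [Finset.card_image_of_injective S hinj]; exact hcard
    have e := heq (S.image f) himg (f i) (Finset.mem_image_of_mem f hiS)
    simp only [PLchoice] at e
    rw [Finset.sum_image (fun x _ y _ hxy => hinj hxy),
      Finset.sum_image (fun x _ y _ hxy => hinj hxy),
      Finset.sum_image (fun x _ y _ hxy => hinj hxy),
      Finset.sum_image (fun x _ y _ hxy => hinj hxy)] at e
    rw [hA, hB, hC, hD]
    rw [hratio θ1 hp1 S hSne i hiS, hratio θ2 hp2 S hSne i hiS,
      hratio θ1' hp1' S hSne i hiS, hratio θ2' hp2' S hSne i hiS]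
    exact e
  have hcore := core α α' hα0 hα1 hα'0 hα'1 A B C D
    (fun t => div_pos (hp1 (f t)) hσa) (fun t => div_pos (hp2 (f t)) hσb)
    (fun t => div_pos (hp1' (f t)) hσc) (fun t => div_pos (hp2' (f t)) hσd)
    (hnorm θ1 hp1) (hnorm θ2 hp2) (hnorm θ1' hp1') (hnorm θ2' hp2') heqc
  -- translators
  have trans1 : (C = A) → ∀ x ∈ ({i0,i1,i2,i3} : Finset (Fin m)),
      ∀ y ∈ ({i0,i1,i2,i3} : Finset (Fin m)), θ1 x * θ1' y = θ1 y * θ1' x := by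
    intro hCA x hx y hy
    obtain ⟨tx, rfl⟩ := hTf x hx
    obtain ⟨ty, rfl⟩ := hTf y hy
    have h1 : θ1' (f tx) * (∑ t, θ1 (f t)) = θ1 (f tx) * (∑ t, θ1' (f t)) := by
      have := congrFun hCA tx
      rw [hC, hA] at this
      field_simp at this
      linear_combination this
    have h2 : θ1' (f ty) * (∑ t, θ1 (f t)) = θ1 (f ty) * (∑ t, θ1' (f t)) := by
      have := congrFun hCA ty
      rw [hC, hA] at this
      field_simp at this
      linear_combination this
    exact crossHelp _ _ _ _ _ _ hσa hσc h1 h2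
  have mkTrans : ∀ (u v : Fin m → ℝ) (hu : ∀ i, 0 < u i) (hv : ∀ i, 0 < v i),
      ((fun t => v (f t) / (∑ t, v (f t))) = (fun t => u (f t) / (∑ t, u (f t)))) →
      ∀ x ∈ ({i0,i1,i2,i3} : Finset (Fin m)),
      ∀ y ∈ ({i0,i1,i2,i3} : Finset (Fin m)), u x * v y = u y * v x := by
    intro u v hu hv hUV x hx y hy
    obtain ⟨tx, rfl⟩ := hTf x hx
    obtain ⟨ty, rfl⟩ := hTf y hy
    have hσu := sumpos u hu
    have hσv := sumpos v hv
    have h1 : v (f tx) * (∑ t, u (f t)) = u (f tx) * (∑ t, v (f t)) := by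
      have := congrFun hUV tx
      field_simp at this
      linear_combination this
    have h2 : v (f ty) * (∑ t, u (f t)) = u (f ty) * (∑ t, v (f t)) := by
      have := congrFun hUV ty
      field_simp at this
      linear_combination this
    exact crossHelp _ _ _ _ _ _ hσu hσv h1 h2
  rcases hcore with ⟨hCA, hDB, hcl⟩ | ⟨hCB, hDA, hcl⟩
  · left
    constructor
    · intro x hx y hy
      exact ⟨mkTrans θ1 θ1' hp1 hp1' (by rw [← hC, ← hA]; exact hCA) x hx y hy,
        mkTrans θ2 θ2' hp2 hp2' (by rw [← hD, ← hB]; exact hDB) x hx y hy⟩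
    · rcases hcl with hww | hba
      · exact Or.inl hww
      · exact Or.inr (mkTrans θ1 θ2 hp1 hp2 (by rw [← hB, ← hA]; exact hba))
  · right
    constructor
    · intro x hx y hy
      exact ⟨mkTrans θ2 θ1' hp2 hp1' (by rw [← hC, ← hB]; exact hCB) x hx y hy,
        mkTrans θ1 θ2' hp1 hp2' (by rw [← hD, ← hA]; exact hDA) x hx y hy⟩
    · rcases hcl with hww | hba
      · exact Or.inl hww
      · exact Or.inr (mkTrans θ1 θ2 hp1 hp2 (by rw [← hB, ← hA]; exact hba))


/-- **Identifiability of 2-PL from choice-2,3,4 data** (Theorem 2(c)): over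
`m ≥ 4` alternatives, if two 2-PL parameters assign the same marginal
probability to every choice order `(A', a)` with `|A'| ∈ {2,3,4}` and `a ∈ A'`,
then their mixing measures coincide. -/
theorem twoPL_identifiable_choice234
    (m : ℕ) (hm : 4 ≤ m)
    (α α' : ℝ) (hα : 0 < α ∧ α < 1) (hα' : 0 < α' ∧ α' < 1)
    (θ1 θ2 θ1' θ2' : Fin m → ℝ)
    (hθ1 : IsPLParam θ1) (hθ2 : IsPLParam θ2)
    (hθ1' : IsPLParam θ1') (hθ2' : IsPLParam θ2')
    (heq : ∀ A' : Finset (Fin m), (A'.card = 2 ∨ A'.card = 3 ∨ A'.card = 4) →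
      ∀ a ∈ A',
        α * PLchoice θ1 A' a + (1 - α) * PLchoice θ2 A' a
          = α' * PLchoice θ1' A' a + (1 - α') * PLchoice θ2' A' a) :
    mixing2 α θ1 θ2 = mixing2 α' θ1' θ2' := by
  obtain ⟨hα0, hα1⟩ := hα
  obtain ⟨hα'0, hα'1⟩ := hα'
  obtain ⟨hp1, hs1⟩ := hθ1
  obtain ⟨hp2, hs2⟩ := hθ2
  obtain ⟨hp1', hs1'⟩ := hθ1'
  obtain ⟨hp2', hs2'⟩ := hθ2'
  have hext : ∀ (s : Finset (Fin m)), s.card < m → ∃ x, x ∉ s := by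
    intro s hs
    by_contra hno
    push_neg at hno
    have hsub : (Finset.univ : Finset (Fin m)) ⊆ s := fun x _ => hno x
    have := Finset.card_le_card hsub
    rw [Finset.card_univ, Fintype.card_fin] at this
    omega
  have hext3 : ∀ p q k : Fin m, ∃ s', s' ≠ p ∧ s' ≠ q ∧ s' ≠ k := by
    intro p q k
    obtain ⟨s', hs'⟩ := hext {p, q, k} (by
      have c1 : ({q, k} : Finset (Fin m)).card ≤ 2 :=
        le_trans (Finset.card_insert_le _ _) (by simp)
      have c2 : ({p, q, k} : Finset (Fin m)).card ≤ 3 :=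
        le_trans (Finset.card_insert_le _ _) (by omega)
      omega)
    simp only [Finset.mem_insert, Finset.mem_singleton] at hs'
    push_neg at hs'
    exact ⟨s', hs'.1, hs'.2.1, hs'.2.2⟩
  have hext2 : ∀ p q : Fin m, p ≠ q → ∃ r s, p ≠ r ∧ p ≠ s ∧ q ≠ r ∧ q ≠ s ∧ r ≠ s := by
    intro p q hpq
    obtain ⟨r, hr1, hr2, _⟩ := hext3 p q q
    obtain ⟨s, hs1, hs2, hs3⟩ := hext3 p q r
    exact ⟨r, s, Ne.symm hr1, Ne.symm hs1, Ne.symm hr2, Ne.symm hs2, Ne.symm hs3⟩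
  have COR := corAt m α α' hα0 hα1 hα'0 hα'1 θ1 θ2 θ1' θ2' hp1 hp2 hp1' hp2' heq
  have sumEq : ∀ (u v : Fin m → ℝ), (∑ i, u i = 1) → (∑ i, v i = 1) →
      (∀ x y, u x * v y = u y * v x) → v = u := by
    intro u v hsu hsv hcross
    funext x
    have h1 : u x * ∑ y, v y = v x * ∑ y, u y := by
      rw [Finset.mul_sum, Finset.mul_sum]
      exact Finset.sum_congr rfl (fun y _ => by rw [hcross x y]; ring)
    rw [hsu, hsv, mul_one, mul_one] at h1
    exact h1.symm
  by_cases h12 : θ1 = θ2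
  · have crossAll : ∀ x y, (θ1 x * θ1' y = θ1 y * θ1' x) ∧ (θ1 x * θ2' y = θ1 y * θ2' x) := by
      intro x y
      by_cases hxy : x = y
      · subst hxy; exact ⟨by ring, by ring⟩
      · obtain ⟨r, s, hxr, hxs, hyr, hys, hrs⟩ := hext2 x y hxy
        have hxT : x ∈ ({x,y,r,s} : Finset (Fin m)) := by simp
        have hyT : y ∈ ({x,y,r,s} : Finset (Fin m)) := by simp
        rcases COR x y r s hxy hxr hxs hyr hys hrs with ⟨hc, _⟩ | ⟨hc, _⟩
        · obtain ⟨e1, e2⟩ := hc x hxT y hyT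
          exact ⟨e1, by rw [h12]; exact e2⟩
        · obtain ⟨e1, e2⟩ := hc x hxT y hyT
          exact ⟨by rw [h12]; exact e1, e2⟩
    have hq1 : θ1' = θ1 := sumEq θ1 θ1' hs1 hs1' (fun x y => (crossAll x y).1)
    have hq2 : θ2' = θ1 := sumEq θ1 θ2' hs1 hs2' (fun x y => (crossAll x y).2)
    rw [hq1, hq2, ← h12]
    funext t
    simp only [mixing2]
    split_ifs <;> ring
  · have hexq : ∃ p q, θ1 p * θ2 q ≠ θ1 q * θ2 p := by
      by_contra hno
      push_neg at hno
      exact h12 (sumEq θ1 θ2 hs1 hs2 hno).symm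
    obtain ⟨p, q, hne⟩ := hexq
    have hpq : p ≠ q := by intro h; apply hne; rw [h]
    obtain ⟨r, s, hpr, hps, hqr, hqs, hrs⟩ := hext2 p q hpq
    have hpT0 : p ∈ ({p,q,r,s} : Finset (Fin m)) := by simp
    have hqT0 : q ∈ ({p,q,r,s} : Finset (Fin m)) := by simp
    rcases COR p q r s hpq hpr hps hqr hqs hrs with ⟨hc0, hcl0⟩ | ⟨hc0, hcl0⟩
    · -- θ1' matches θ1, θ2' matches θ2
      have hww : α' = α := by
        rcases hcl0 with h | h
        · exact h
        · exact absurd (h p hpT0 q hqT0) hne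
      have cross1 : ∀ k, θ1 p * θ1' k = θ1 k * θ1' p ∧ θ2 p * θ2' k = θ2 k * θ2' p := by
        intro k
        by_cases hkp : k = p
        · subst hkp; exact ⟨by ring, by ring⟩
        by_cases hkq : k = q
        · rw [hkq]; exact hc0 p hpT0 q hqT0
        obtain ⟨s', hs'p, hs'q, hs'k⟩ := hext3 p q k
        have hpT : p ∈ ({p,q,k,s'} : Finset (Fin m)) := by simp
        have hqT : q ∈ ({p,q,k,s'} : Finset (Fin m)) := by simp
        have hkT : k ∈ ({p,q,k,s'} : Finset (Fin m)) := by simp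
        rcases COR p q k s' hpq (Ne.symm hkp) (Ne.symm hs'p) (Ne.symm hkq) (Ne.symm hs'q)
          (Ne.symm hs'k) with ⟨hc, _⟩ | ⟨hc, _⟩
        · exact hc p hpT k hkT
        · exfalso
          apply hne
          have A1 := (hc0 p hpT0 q hqT0).1
          have B1 := (hc p hpT q hqT).1
          have key : θ1' q * (θ1 p * θ2 q - θ1 q * θ2 p) = 0 := by
            linear_combination θ2 q * A1 - θ1 q * B1
          exact eqOfMulFac _ _ _ (hp1' q) key
      have hpp1 : θ1' p = θ1 p := by
        have h1 : θ1 p * ∑ k, θ1' k = θ1' p * ∑ k, θ1 k := by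
          rw [Finset.mul_sum, Finset.mul_sum]
          exact Finset.sum_congr rfl (fun k _ => by rw [(cross1 k).1]; ring)
        rw [hs1, hs1', mul_one, mul_one] at h1
        exact h1.symm
      have hpp2 : θ2' p = θ2 p := by
        have h1 : θ2 p * ∑ k, θ2' k = θ2' p * ∑ k, θ2 k := by
          rw [Finset.mul_sum, Finset.mul_sum]
          exact Finset.sum_congr rfl (fun k _ => by rw [(cross1 k).2]; ring)
        rw [hs2, hs2', mul_one, mul_one] at h1
        exact h1.symm
      have e1 : θ1' = θ1 := by
        funext k
        have hk := (cross1 k).1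
        rw [hpp1, mul_comm (θ1 k) (θ1 p)] at hk
        exact mul_left_cancel₀ (ne_of_gt (hp1 p)) hk
      have e2 : θ2' = θ2 := by
        funext k
        have hk := (cross1 k).2
        rw [hpp2, mul_comm (θ2 k) (θ2 p)] at hk
        exact mul_left_cancel₀ (ne_of_gt (hp2 p)) hk
      rw [hww, e1, e2]
    · -- θ1' matches θ2, θ2' matches θ1
      have hww : α' = 1 - α := by
        rcases hcl0 with h | h
        · exact h
        · exact absurd (h p hpT0 q hqT0) hne
      have cross2 : ∀ k, θ2 p * θ1' k = θ2 k * θ1' p ∧ θ1 p * θ2' k = θ1 k * θ2' p := by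
        intro k
        by_cases hkp : k = p
        · subst hkp; exact ⟨by ring, by ring⟩
        by_cases hkq : k = q
        · rw [hkq]; exact hc0 p hpT0 q hqT0
        obtain ⟨s', hs'p, hs'q, hs'k⟩ := hext3 p q k
        have hpT : p ∈ ({p,q,k,s'} : Finset (Fin m)) := by simp
        have hqT : q ∈ ({p,q,k,s'} : Finset (Fin m)) := by simp
        have hkT : k ∈ ({p,q,k,s'} : Finset (Fin m)) := by simp
        rcases COR p q k s' hpq (Ne.symm hkp) (Ne.symm hs'p) (Ne.symm hkq) (Ne.symm hs'q)
          (Ne.symm hs'k) with ⟨hc, _⟩ | ⟨hc, _⟩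
        · exfalso
          apply hne
          have B1 := (hc0 p hpT0 q hqT0).1
          have A1 := (hc p hpT q hqT).1
          have key : θ1' q * (θ1 p * θ2 q - θ1 q * θ2 p) = 0 := by
            linear_combination θ2 q * A1 - θ1 q * B1
          exact eqOfMulFac _ _ _ (hp1' q) key
        · exact hc p hpT k hkT
      have hpp1 : θ1' p = θ2 p := by
        have h1 : θ2 p * ∑ k, θ1' k = θ1' p * ∑ k, θ2 k := by
          rw [Finset.mul_sum, Finset.mul_sum]
          exact Finset.sum_congr rfl (fun k _ => by rw [(cross2 k).1]; ring)
        rw [hs2, hs1', mul_one, mul_one] at h1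
        exact h1.symm
      have hpp2 : θ2' p = θ1 p := by
        have h1 : θ1 p * ∑ k, θ2' k = θ2' p * ∑ k, θ1 k := by
          rw [Finset.mul_sum, Finset.mul_sum]
          exact Finset.sum_congr rfl (fun k _ => by rw [(cross2 k).2]; ring)
        rw [hs1, hs2', mul_one, mul_one] at h1
        exact h1.symm
      have e1 : θ1' = θ2 := by
        funext k
        have hk := (cross2 k).1
        rw [hpp1, mul_comm (θ2 k) (θ2 p)] at hk
        exact mul_left_cancel₀ (ne_of_gt (hp2 p)) hk
      have e2 : θ2' = θ1 := by
        funext k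
        have hk := (cross2 k).2
        rw [hpp2, mul_comm (θ1 k) (θ1 p)] at hk
        exact mul_left_cancel₀ (ne_of_gt (hp1 p)) hk
      rw [hww, e1, e2]
      funext t
      simp only [mixing2]
      split_ifs <;> ring
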